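/- arXiv:2305.13428 — 6 statements merged into one kernel-verified Lean document; each statement's English description precedes it below -/
import Mathlib

section
/- Let m ∈ C satisfy b(m,m) = 1. Then for all x, y ∈ C one has 2·b(x,y) + b(x,m)² + b(y,m)² ≥ 2·b(x,m)·b(y,m) + b(x,x) + b(y,y). (This is obtained by applying the reverse Cauchy–Schwarz inequality to the elements x + t·m and y + t·m of C and extracting the leading coefficient of the resulting polynomial inequality in t > 0.) -/
lemma aux_coeff (c2 c1 c0 : ℝ) (h : ∀ s : ℝ, 0 < s → 0 ≤ c2 + s * c1 + s ^ 2 * c0) :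
    0 ≤ c2 := by
  by_contra hc
  push_neg at hc
  set M : ℝ := |c1| + |c0| + 1 with hM
  have hMpos : 0 < M := by positivity
  set s : ℝ := min 1 (-c2 / M) with hs
  have hspos : 0 < s := lt_min one_pos (div_pos (by linarith) hMpos)
  have hs1 : s ≤ 1 := min_le_left _ _
  have hs2 : s ≤ -c2 / M := min_le_right _ _
  have h1 := h s hspos
  have hc1 : s * c1 ≤ s * |c1| := by nlinarith [le_abs_self c1]
  have e1 : s ^ 2 * c0 ≤ s ^ 2 * |c0| := by nlinarith [le_abs_self c0, sq_nonneg s]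
  have e2 : s ^ 2 * |c0| ≤ s * |c0| := by
    nlinarith [mul_nonneg hspos.le (sub_nonneg.2 hs1), abs_nonneg c0]
  have hsM : s * M ≤ -c2 := (le_div_iff₀ hMpos).mp hs2
  have : s * M = s * |c1| + s * |c0| + s := by ring
  linarith

/-- Let `W` be a real vector space, `b` a symmetric bilinear form on `W`, and `C ⊆ W` a
nonempty subset closed under addition and under scalar multiplication by positive reals,
on which `b` is nonnegative and satisfies the reverse Cauchy–Schwarz inequality
`b x x * b y y ≤ (b x y)^2`.  If `m ∈ C` satisfies `b m m = 1`, then for all `x, y ∈ C`,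
`2·b(x,y) + b(x,m)² + b(y,m)² ≥ 2·b(x,m)·b(y,m) + b(x,x) + b(y,y)`. -/
theorem stmt0 {W : Type*} [AddCommGroup W] [Module ℝ W]
    (b : W →ₗ[ℝ] W →ₗ[ℝ] ℝ) (hsymm : ∀ x y : W, b x y = b y x)
    (C : Set W) (hne : C.Nonempty)
    (hadd : ∀ x ∈ C, ∀ y ∈ C, x + y ∈ C)
    (hsmul : ∀ t : ℝ, 0 < t → ∀ x ∈ C, t • x ∈ C)
    (hnonneg : ∀ x ∈ C, ∀ y ∈ C, 0 ≤ b x y)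
    (hrevCS : ∀ x ∈ C, ∀ y ∈ C, b x x * b y y ≤ (b x y) ^ 2)
    (m : W) (hm : m ∈ C) (hmm : b m m = 1) :
    ∀ x ∈ C, ∀ y ∈ C,
      2 * b x m * b y m + b x x + b y y ≤
        2 * b x y + (b x m) ^ 2 + (b y m) ^ 2 := by
  intro x hx y hy
  have key : ∀ s : ℝ, 0 < s →
      0 ≤ (2 * b x y + (b x m) ^ 2 + (b y m) ^ 2 - (2 * b x m * b y m + b x x + b y y))
        + s * (2 * b x y * (b x m + b y m) - 2 * b x x * b y m - 2 * b y y * b x m)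
        + s ^ 2 * ((b x y) ^ 2 - b x x * b y y) := by
    intro s hs
    have hxs : s • x + m ∈ C := hadd _ (hsmul s hs x hx) _ hm
    have hys : s • y + m ∈ C := hadd _ (hsmul s hs y hy) _ hm
    have h := hrevCS _ hxs _ hys
    simp only [map_add, map_smul, LinearMap.add_apply, LinearMap.smul_apply, smul_eq_mul] at h
    rw [hsymm m x, hsymm m y, hmm] at h
    have hs2 : 0 < s ^ 2 := by positivity
    nlinarith [h, hs2, mul_pos hs2 hs]
  have := aux_coeff _ _ _ key
  linarith
end

section
/- Let m ∈ C satisfy b(m,m) > 0, and define the symmetric bilinear form ρ_m(v,w) := b(v,m)·b(w,m) − b(m,m)·b(v,w). Then ρ_m is positive semidefinite on the subspace C − C of W; explicitly, for all x, y ∈ C one has (b(x,m) − b(y,m))² − b(m,m)·(b(x,x) − 2·b(x,y) + b(y,y)) ≥ 0. -/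
/-- If a quadratic is nonnegative on all positive reals, its leading coefficient
is nonnegative. -/
lemma quad_lead_nonneg (A B c0 : ℝ) (h : ∀ t : ℝ, 0 < t → 0 ≤ A * t ^ 2 + B * t + c0) :
    0 ≤ A := by
  by_contra hA
  push_neg at hA
  set t : ℝ := max 1 ((|B| + |c0| + 1) / (-A)) with ht
  have ht1 : 1 ≤ t := le_max_left _ _
  have htpos : 0 < t := lt_of_lt_of_le one_pos ht1
  have ht2 : (|B| + |c0| + 1) / (-A) ≤ t := le_max_right _ _
  have hAneg : 0 < -A := by linarith
  have hAt : |B| + |c0| + 1 ≤ (-A) * t := (div_le_iff₀' hAneg).mp ht2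
  have h1 : A * t ≤ -(|B| + |c0| + 1) := by nlinarith
  have h2 : A * t ^ 2 ≤ -(|B| + |c0| + 1) * t := by nlinarith
  have h3 : B * t ≤ |B| * t := by nlinarith [le_abs_self B]
  have h4 : c0 ≤ |c0| * t := by nlinarith [le_abs_self c0, abs_nonneg c0]
  have := h t htpos
  nlinarith

/-- Let `W` be a real vector space, `b` a symmetric bilinear form on `W`, and `C ⊆ W` a
nonempty subset closed under addition and under scalar multiplication by positive reals,
on which `b` is nonnegative and satisfies the reverse Cauchy–Schwarz inequality.
If `m ∈ C` satisfies `b m m > 0`, then the symmetric bilinear form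
`ρ_m(v,w) := b(v,m)·b(w,m) − b(m,m)·b(v,w)` is positive semidefinite on `C − C`;
explicitly, for all `x, y ∈ C`,
`(b(x,m) − b(y,m))² − b(m,m)·(b(x,x) − 2·b(x,y) + b(y,y)) ≥ 0`. -/
theorem stmt1 {W : Type*} [AddCommGroup W] [Module ℝ W]
    (b : W →ₗ[ℝ] W →ₗ[ℝ] ℝ) (hsymm : ∀ x y : W, b x y = b y x)
    (C : Set W) (hne : C.Nonempty)
    (hadd : ∀ x ∈ C, ∀ y ∈ C, x + y ∈ C)
    (hsmul : ∀ t : ℝ, 0 < t → ∀ x ∈ C, t • x ∈ C)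
    (hnonneg : ∀ x ∈ C, ∀ y ∈ C, 0 ≤ b x y)
    (hrevCS : ∀ x ∈ C, ∀ y ∈ C, b x x * b y y ≤ (b x y) ^ 2)
    (m : W) (hm : m ∈ C) (hmm : 0 < b m m)
    (ρ : W → W → ℝ) (hρ : ∀ v w : W, ρ v w = b v m * b w m - b m m * b v w) :
    ∀ x ∈ C, ∀ y ∈ C,
      0 ≤ (b x m - b y m) ^ 2 - b m m * (b x x - 2 * b x y + b y y) ∧
      0 ≤ ρ (x - y) (x - y) := by
  intro x hx y hy
  -- the key inequality family: reverse CS for (x + t m, y + t m), t > 0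
  have key : ∀ t : ℝ, 0 < t →
      0 ≤ ((b x m - b y m) ^ 2 - b m m * (b x x - 2 * b x y + b y y)) * t ^ 2
        + (2 * (b x y * (b x m + b y m) - b x x * b y m - b y y * b x m)) * t
        + ((b x y) ^ 2 - b x x * b y y) := by
    intro t ht
    have hxm : x + t • m ∈ C := hadd x hx _ (hsmul t ht m hm)
    have hym : y + t • m ∈ C := hadd y hy _ (hsmul t ht m hm)
    have hcs := hrevCS _ hxm _ hym
    simp only [map_add, map_smul, LinearMap.add_apply, LinearMap.smul_apply,
      smul_eq_mul] at hcs
    simp only [hsymm m x, hsymm m y, hsymm y x] at hcs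
    nlinarith [hcs]
  have main : 0 ≤ (b x m - b y m) ^ 2 - b m m * (b x x - 2 * b x y + b y y) :=
    quad_lead_nonneg _ _ _ key
  refine ⟨main, ?_⟩
  have hexp : ρ (x - y) (x - y)
      = (b x m - b y m) ^ 2 - b m m * (b x x - 2 * b x y + b y y) := by
    rw [hρ]
    simp only [map_sub, LinearMap.sub_apply]
    rw [hsymm y x]
    ring
  rw [hexp]
  exact main
end

section
/- Assume in addition that b(x,x) > 0 for every x ∈ C, and define β(x,y) := b(x,y)/√(b(x,x)·b(y,y)) for x, y ∈ C. Then β is a kernel of hyperbolic type on C: β is symmetric, nonnegative, β(x,x) = 1 for all x ∈ C, and for every n ≥ 1, every choice of points x₀, x₁, …, x_n ∈ C and every choice of reals c₁, …, c_n, one has ∑_{i,j=1}^n c_i c_j β(x_i, x_j) ≤ (∑_{k=1}^n c_k β(x_k, x₀))². -/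
set_option maxHeartbeats 1600000 in
/-- Let `W` be a real vector space, `b` a symmetric bilinear form on `W`, and `C ⊆ W` a
nonempty subset closed under addition and under scalar multiplication by positive reals,
on which `b` is nonnegative and satisfies the reverse Cauchy–Schwarz inequality, and assume
moreover `b x x > 0` for every `x ∈ C`.  Define `β(x,y) := b(x,y)/√(b(x,x)·b(y,y))`.
Then `β` is a kernel of hyperbolic type on `C`: it is symmetric, nonnegative, equal to `1`
on the diagonal, and for every `n ≥ 1`, all points `x₀, x₁, …, x_n ∈ C` and all reals
`c₁, …, c_n`, one has `∑_{i,j} c_i c_j β(x_i,x_j) ≤ (∑_k c_k β(x_k,x₀))²`. -/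
theorem stmt2 {W : Type*} [AddCommGroup W] [Module ℝ W]
    (b : W →ₗ[ℝ] W →ₗ[ℝ] ℝ) (hsymm : ∀ x y : W, b x y = b y x)
    (C : Set W) (hne : C.Nonempty)
    (hadd : ∀ x ∈ C, ∀ y ∈ C, x + y ∈ C)
    (hsmul : ∀ t : ℝ, 0 < t → ∀ x ∈ C, t • x ∈ C)
    (hnonneg : ∀ x ∈ C, ∀ y ∈ C, 0 ≤ b x y)
    (hrevCS : ∀ x ∈ C, ∀ y ∈ C, b x x * b y y ≤ (b x y) ^ 2)
    (hpos : ∀ x ∈ C, 0 < b x x)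
    (β : W → W → ℝ)
    (hβ : ∀ x y : W, β x y = b x y / Real.sqrt (b x x * b y y)) :
    (∀ x ∈ C, ∀ y ∈ C, β x y = β y x) ∧
    (∀ x ∈ C, ∀ y ∈ C, 0 ≤ β x y) ∧
    (∀ x ∈ C, β x x = 1) ∧
    (∀ n : ℕ, 1 ≤ n → ∀ x₀ : W, x₀ ∈ C → ∀ x : Fin n → W, (∀ i, x i ∈ C) →
      ∀ c : Fin n → ℝ,
        ∑ i, ∑ j, c i * c j * β (x i) (x j) ≤ (∑ k, c k * β (x k) x₀) ^ 2) := by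
  have sqpos : ∀ x ∈ C, 0 < Real.sqrt (b x x) := fun x hx => Real.sqrt_pos.mpr (hpos x hx)
  refine ⟨fun x hx y hy => by rw [hβ, hβ, hsymm x y, mul_comm (b x x)],
          fun x hx y hy => by
            rw [hβ]; exact div_nonneg (hnonneg x hx y hy) (Real.sqrt_nonneg _),
          fun x hx => by
            rw [hβ, Real.sqrt_mul_self (le_of_lt (hpos x hx)),
              div_self (ne_of_gt (hpos x hx))],
          ?_⟩
  intro n hn x₀ hx₀ x hx c
  set Z : ℝ := b x₀ x₀ with hZdef
  have hZ0 : 0 < Z := hpos x₀ hx₀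
  -- Key lemma: span elements orthogonal to x₀ are b-nonpositive
  have hdec : ∀ w ∈ Submodule.span ℝ C, ∃ p q, (p ∈ C ∨ p = 0) ∧ (q ∈ C ∨ q = 0) ∧ w = p - q := by
    intro w hw
    induction hw using Submodule.span_induction with
    | mem z hz => exact ⟨z, 0, Or.inl hz, Or.inr rfl, by simp⟩
    | zero => exact ⟨0, 0, Or.inr rfl, Or.inr rfl, by simp⟩
    | add a a' ha ha' iha iha' =>
        obtain ⟨p, q, hp, hq, rfl⟩ := iha
        obtain ⟨p', q', hp', hq', rfl⟩ := iha'
        refine ⟨p + p', q + q', ?_, ?_, by abel⟩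
        · rcases hp with hp | rfl
          · rcases hp' with hp' | rfl
            · exact Or.inl (hadd _ hp _ hp')
            · simpa using Or.inl hp
          · simpa using hp'
        · rcases hq with hq | rfl
          · rcases hq' with hq' | rfl
            · exact Or.inl (hadd _ hq _ hq')
            · simpa using Or.inl hq
          · simpa using hq'
    | smul t a ha iha =>
        obtain ⟨p, q, hp, hq, rfl⟩ := iha
        rcases lt_trichotomy t 0 with ht | rfl | ht
        · refine ⟨(-t) • q, (-t) • p, ?_, ?_, by
            rw [smul_sub]; rw [neg_smul, neg_smul]; abel⟩
          · rcases hq with hq | rfl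
            · exact Or.inl (hsmul _ (by linarith) _ hq)
            · exact Or.inr (by simp)
          · rcases hp with hp | rfl
            · exact Or.inl (hsmul _ (by linarith) _ hp)
            · exact Or.inr (by simp)
        · exact ⟨0, 0, Or.inr rfl, Or.inr rfl, by simp⟩
        · refine ⟨t • p, t • q, ?_, ?_, by rw [smul_sub]⟩
          · rcases hp with hp | rfl
            · exact Or.inl (hsmul _ ht _ hp)
            · exact Or.inr (by simp)
          · rcases hq with hq | rfl
            · exact Or.inl (hsmul _ ht _ hq)
            · exact Or.inr (by simp)
  have key : ∀ w ∈ Submodule.span ℝ C, b w x₀ = 0 → b w w ≤ 0 := by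
    intro w hw hw0
    obtain ⟨p, q, hp, hq, rfl⟩ := hdec w hw
    rcases hp with hp | rfl
    · rcases hq with hq | rfl
      · -- main case: p, q ∈ C
        have hα : b p x₀ = b q x₀ := by
          have : b p x₀ - b q x₀ = 0 := by
            simpa [map_sub] using hw0
          linarith
        set P : ℝ := b p p with hP
        set Q : ℝ := b q q with hQ
        set B : ℝ := b p q with hB
        set A : ℝ := b x₀ p with hA
        have hAq : b x₀ q = A := by rw [← hsymm q x₀, ← hα, hsymm p x₀]
        have hA0 : 0 ≤ A := hnonneg x₀ hx₀ p hp
        have hP0 : 0 < P := hpos p hp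
        have hQ0 : 0 < Q := hpos q hq
        have hB0 : 0 ≤ B := hnonneg p hp q hq
        have hPQB : P * Q ≤ B ^ 2 := hrevCS p hp q hq
        have hww : b (p - q) (p - q) = P + Q - 2 * B := by
          simp only [map_sub, LinearMap.sub_apply]
          rw [hsymm q p]; ring
        rw [hww]
        by_contra hcon
        push_neg at hcon
        have hlt : 0 < P + Q - 2 * B := hcon
        set M : ℝ := max (B ^ 2 - P * Q) 0 with hM
        have harg : 0 < (M + 1) / (Z * (P + Q - 2 * B)) := by
          apply div_pos
          · have : 0 ≤ M := le_max_right _ _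
            linarith
          · positivity
        set t : ℝ := Real.sqrt ((M + 1) / (Z * (P + Q - 2 * B))) with htdef
        have ht : 0 < t := Real.sqrt_pos.mpr harg
        have ht2 : t ^ 2 = (M + 1) / (Z * (P + Q - 2 * B)) := Real.sq_sqrt harg.le
        have htZ : t ^ 2 * Z * (P + Q - 2 * B) = M + 1 := by
          rw [ht2]; field_simp
        have hp' : t • x₀ + p ∈ C := hadd _ (hsmul t ht _ hx₀) _ hp
        have hq' : t • x₀ + q ∈ C := hadd _ (hsmul t ht _ hx₀) _ hq
        have hcs := hrevCS _ hp' _ hq'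
        have e1 : b (t • x₀ + p) (t • x₀ + p) = t ^ 2 * Z + 2 * t * A + P := by
          simp only [map_add, map_smul, LinearMap.add_apply, LinearMap.smul_apply,
            smul_eq_mul]
          rw [hsymm p x₀]; simp only [← hZdef, ← hA, ← hP]; ring
        have e2 : b (t • x₀ + q) (t • x₀ + q) = t ^ 2 * Z + 2 * t * A + Q := by
          simp only [map_add, map_smul, LinearMap.add_apply, LinearMap.smul_apply,
            smul_eq_mul]
          rw [hsymm q x₀]; simp only [← hZdef, hAq, ← hQ]; ring
        have e3 : b (t • x₀ + p) (t • x₀ + q) = t ^ 2 * Z + 2 * t * A + B := by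
          simp only [map_add, map_smul, LinearMap.add_apply, LinearMap.smul_apply,
            smul_eq_mul]
          rw [hsymm p x₀]; simp only [← hZdef, hAq, ← hA, ← hB]; ring
        rw [e1, e2, e3] at hcs
        have hmax : B ^ 2 - P * Q ≤ M := le_max_left _ _
        nlinarith [mul_nonneg (mul_nonneg (by linarith : (0:ℝ) ≤ 2 * t) hA0) hlt.le]
      · -- q = 0, w = p
        have hw0' : b p x₀ = 0 := by simpa using hw0
        have := hrevCS p hp x₀ hx₀
        rw [hw0'] at this
        have hb : b p p ≤ 0 := by nlinarith
        simpa using hb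
    · -- p = 0, w = -q
      rcases hq with hq | rfl
      · have hw0' : b q x₀ = 0 := by
          have : -(b q x₀) = 0 := by simpa [map_sub] using hw0
          linarith
        have := hrevCS q hq x₀ hx₀
        rw [hw0'] at this
        have hb : b q q ≤ 0 := by nlinarith
        simpa [map_sub] using hb
      · simp
  -- Rewrite sums in terms of v = ∑ dᵢ • xᵢ
  set d : Fin n → ℝ := fun i => c i / Real.sqrt (b (x i) (x i)) with hd
  set v : W := ∑ i, d i • x i with hv
  have hbv : ∀ y : W, b v y = ∑ i, d i * b (x i) y := by
    intro y
    rw [hv]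
    simp [map_sum, LinearMap.sum_apply, map_smul, LinearMap.smul_apply, smul_eq_mul]
  have hterm : ∀ i j : Fin n, c i * c j * β (x i) (x j) = d i * d j * b (x i) (x j) := by
    intro i j
    rw [hβ, Real.sqrt_mul (hpos _ (hx i)).le]
    simp only [hd]
    ring
  have hLHS : ∑ i, ∑ j, c i * c j * β (x i) (x j) = b v v := by
    rw [hbv v]
    refine Finset.sum_congr rfl fun i _ => ?_
    rw [hsymm (x i) v, hbv (x i), Finset.mul_sum]
    exact Finset.sum_congr rfl fun j _ => by rw [hterm i j, hsymm (x j) (x i)]; ring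
  have hRHS : ∑ k, c k * β (x k) x₀ = b v x₀ / Real.sqrt Z := by
    rw [hbv x₀, Finset.sum_div]
    refine Finset.sum_congr rfl fun k _ => ?_
    rw [hβ, Real.sqrt_mul (hpos _ (hx k)).le]
    simp only [hd]
    rw [← hZdef]
    ring
  rw [hLHS, hRHS, div_pow, Real.sq_sqrt hZ0.le]
  clear_value d
  -- main inequality: b v v ≤ (b v x₀)^2 / Z
  have hvspan : v ∈ Submodule.span ℝ C := by
    rw [hv]
    exact Submodule.sum_mem _ fun i _ =>
      Submodule.smul_mem _ _ (Submodule.subset_span (hx i))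
  clear_value v
  set r : ℝ := b v x₀ / Z with hr
  set w : W := v - r • x₀ with hwdef
  have hwspan : w ∈ Submodule.span ℝ C :=
    Submodule.sub_mem _ hvspan (Submodule.smul_mem _ _ (Submodule.subset_span hx₀))
  have hworth : b w x₀ = 0 := by
    rw [hwdef]
    simp only [map_sub, map_smul, LinearMap.sub_apply, LinearMap.smul_apply, smul_eq_mul]
    rw [← hZdef, hr, div_mul_cancel₀ _ hZ0.ne', sub_self]
  have hkey := key w hwspan hworth
  have hww : b w w = b v v - (b v x₀) ^ 2 / Z := by
    rw [hwdef]
    simp only [map_sub, map_smul, LinearMap.sub_apply, LinearMap.smul_apply, smul_eq_mul]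
    rw [hsymm x₀ v, ← hZdef, hr]
    field_simp [hZ0.ne']
    ring
  rw [hww] at hkey
  linarith
end

section
/- For every real a ≥ 1 and every t ∈ [0,1], set s := √(t² + (1−t)² + 2t(1−t)a). Then for all real u, v ≥ 0 satisfying cosh u = (t·a + (1−t))/s and cosh v = ((1−t)·a + t)/s, one has cosh(u + v) = a. -/
/-- For `a ≥ 1`, `t ∈ [0,1]` and `s := √(t² + (1−t)² + 2t(1−t)a)`, if `u, v ≥ 0` satisfy
`cosh u = (t·a + (1−t))/s` and `cosh v = ((1−t)·a + t)/s`, then `cosh (u + v) = a`. -/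
theorem stmt3 (a : ℝ) (ha : 1 ≤ a) (t : ℝ) (ht : t ∈ Set.Icc (0 : ℝ) 1)
    (s : ℝ) (hs : s = Real.sqrt (t ^ 2 + (1 - t) ^ 2 + 2 * t * (1 - t) * a))
    (u v : ℝ) (hu : 0 ≤ u) (hv : 0 ≤ v)
    (hcu : Real.cosh u = (t * a + (1 - t)) / s)
    (hcv : Real.cosh v = ((1 - t) * a + t) / s) :
    Real.cosh (u + v) = a := by
  obtain ⟨ht0, ht1⟩ := ht
  have hS : (1:ℝ) ≤ t ^ 2 + (1 - t) ^ 2 + 2 * t * (1 - t) * a := by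
    nlinarith [mul_nonneg (mul_nonneg ht0 (by linarith : (0:ℝ) ≤ 1 - t)) (by linarith : (0:ℝ) ≤ a - 1)]
  have hs0 : 0 < s := by rw [hs]; exact Real.sqrt_pos.mpr (by linarith)
  have hs2 : s ^ 2 = t ^ 2 + (1 - t) ^ 2 + 2 * t * (1 - t) * a := by
    rw [hs, Real.sq_sqrt (by linarith)]
  have hsu : Real.sinh u ^ 2 = Real.cosh u ^ 2 - 1 := by
    have := Real.cosh_sq u; linarith
  have hsv : Real.sinh v ^ 2 = Real.cosh v ^ 2 - 1 := by
    have := Real.cosh_sq v; linarith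
  have hsun : 0 ≤ Real.sinh u := Real.sinh_nonneg_iff.mpr hu
  have hsvn : 0 ≤ Real.sinh v := Real.sinh_nonneg_iff.mpr hv
  have hprodnn : 0 ≤ t * (1 - t) * (a ^ 2 - 1) / s ^ 2 := by
    apply div_nonneg _ (sq_nonneg s)
    nlinarith
  have hprod : Real.sinh u * Real.sinh v = t * (1 - t) * (a ^ 2 - 1) / s ^ 2 := by
    have hsq : (Real.sinh u * Real.sinh v) ^ 2
        = (t * (1 - t) * (a ^ 2 - 1) / s ^ 2) ^ 2 := by
      rw [mul_pow, hsu, hsv, hcu, hcv]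
      field_simp
      rw [hs2]; ring
    nlinarith [hsq, mul_nonneg hsun hsvn, hprodnn]
  rw [Real.cosh_add, hcu, hcv, hprod]
  have h1 : (t * a + (1 - t)) / s * (((1 - t) * a + t) / s)
      = (t * a + (1 - t)) * ((1 - t) * a + t) / s ^ 2 := by
    rw [div_mul_div_comm, sq]
  rw [h1, ← add_div]
  have hnum : (t * a + (1 - t)) * ((1 - t) * a + t) + t * (1 - t) * (a ^ 2 - 1)
      = a * s ^ 2 := by rw [hs2]; ring
  rw [hnum, mul_div_assoc, div_self (by positivity), mul_one]
end

section
/- Let (a_i)_{i≥1} and (b_i)_{i≥1} be sequences of strictly positive real numbers. For n ≥ 2 put S_n^a := ∑_{i=1}^n a_i, S_n^b := ∑_{i=1}^n b_i, E_n^a := ∑_{1≤i<j≤n} a_i a_j, and E_n^b := ∑_{1≤i<j≤n} b_i b_j. Assume (∑_{i=1}^n a_i²)/(S_n^a)² → 0 and (∑_{i=1}^n b_i²)/(S_n^b)² → 0 as n → ∞. Then (S_n^a · S_n^b − ∑_{i=1}^n a_i b_i)/(2·√(E_n^a · E_n^b)) → 1 as n → ∞. -/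
open Filter

lemma double_sum_eq (a : ℕ → ℝ) (n : ℕ) :
    2 * ∑ j ∈ Finset.Icc 1 n, ∑ i ∈ Finset.Ico 1 j, a i * a j
      = (∑ i ∈ Finset.Icc 1 n, a i) ^ 2 - ∑ i ∈ Finset.Icc 1 n, (a i) ^ 2 := by
  induction n with
  | zero => simp
  | succ n ih =>
    have h1 : Finset.Icc 1 (n+1) = insert (n+1) (Finset.Icc 1 n) := by
      rw [← Finset.Ico_add_one_right_eq_Icc, ← Finset.Ico_add_one_right_eq_Icc,
        ← Finset.insert_Ico_right_eq_Ico_add_one (show 1 ≤ n + 1 by omega)]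
    have h2 : Finset.Ico 1 (n+1) = Finset.Icc 1 n := Finset.Ico_add_one_right_eq_Icc 1 n
    have hnot : (n+1) ∉ Finset.Icc 1 n := by simp
    rw [h1, Finset.sum_insert hnot, Finset.sum_insert hnot, Finset.sum_insert hnot, h2,
      ← Finset.sum_mul]
    nlinarith [ih]


/-- Let `(a_i)_{i≥1}`, `(b_i)_{i≥1}` be strictly positive reals with
`S_n^a := ∑_{i=1}^n a_i`, `S_n^b := ∑_{i=1}^n b_i`, `E_n^a := ∑_{1≤i<j≤n} a_i a_j`,
`E_n^b := ∑_{1≤i<j≤n} b_i b_j`.  If `(∑_{i=1}^n a_i²)/(S_n^a)² → 0` and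
`(∑_{i=1}^n b_i²)/(S_n^b)² → 0`, then
`(S_n^a·S_n^b − ∑_{i=1}^n a_i b_i)/(2·√(E_n^a·E_n^b)) → 1`. -/
theorem stmt8 (a b : ℕ → ℝ) (ha : ∀ i, 0 < a i) (hb : ∀ i, 0 < b i)
    (hA : Tendsto (fun n : ℕ =>
        (∑ i ∈ Finset.Icc 1 n, (a i) ^ 2) / (∑ i ∈ Finset.Icc 1 n, a i) ^ 2)
      atTop (nhds 0))
    (hB : Tendsto (fun n : ℕ =>
        (∑ i ∈ Finset.Icc 1 n, (b i) ^ 2) / (∑ i ∈ Finset.Icc 1 n, b i) ^ 2)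
      atTop (nhds 0)) :
    Tendsto (fun n : ℕ =>
        ((∑ i ∈ Finset.Icc 1 n, a i) * (∑ i ∈ Finset.Icc 1 n, b i)
            - ∑ i ∈ Finset.Icc 1 n, a i * b i) /
          (2 * Real.sqrt ((∑ j ∈ Finset.Icc 1 n, ∑ i ∈ Finset.Ico 1 j, a i * a j) *
              (∑ j ∈ Finset.Icc 1 n, ∑ i ∈ Finset.Ico 1 j, b i * b j))))
      atTop (nhds 1) := by
  set Qa : ℕ → ℝ := fun n =>
    (∑ i ∈ Finset.Icc 1 n, (a i) ^ 2) / (∑ i ∈ Finset.Icc 1 n, a i) ^ 2 with hQa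
  set Qb : ℕ → ℝ := fun n =>
    (∑ i ∈ Finset.Icc 1 n, (b i) ^ 2) / (∑ i ∈ Finset.Icc 1 n, b i) ^ 2 with hQb
  set P : ℕ → ℝ := fun n => (∑ i ∈ Finset.Icc 1 n, a i * b i) /
      ((∑ i ∈ Finset.Icc 1 n, a i) * (∑ i ∈ Finset.Icc 1 n, b i)) with hPdef
  have hSa : ∀ n, 1 ≤ n → 0 < ∑ i ∈ Finset.Icc 1 n, a i := fun n hn =>
    Finset.sum_pos (fun i _ => ha i) (Finset.nonempty_Icc.2 hn)
  have hSb : ∀ n, 1 ≤ n → 0 < ∑ i ∈ Finset.Icc 1 n, b i := fun n hn =>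
    Finset.sum_pos (fun i _ => hb i) (Finset.nonempty_Icc.2 hn)
  -- P → 0
  have hP0 : Tendsto P atTop (nhds 0) := by
    have hupper : Tendsto (fun n => Real.sqrt (Qa n * Qb n)) atTop (nhds 0) := by
      have := (hA.mul hB).sqrt
      simpa using this
    apply tendsto_of_tendsto_of_tendsto_of_le_of_le' tendsto_const_nhds hupper
    · filter_upwards [eventually_ge_atTop 1] with n hn
      exact div_nonneg (Finset.sum_nonneg fun i _ => le_of_lt (mul_pos (ha i) (hb i)))
        (le_of_lt (mul_pos (hSa n hn) (hSb n hn)))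
    · filter_upwards [eventually_ge_atTop 1] with n hn
      have hPnn : 0 ≤ P n :=
        div_nonneg (Finset.sum_nonneg fun i _ => le_of_lt (mul_pos (ha i) (hb i)))
          (le_of_lt (mul_pos (hSa n hn) (hSb n hn)))
      have hsq : P n ^ 2 ≤ Qa n * Qb n := by
        have hcs := Finset.sum_mul_sq_le_sq_mul_sq (Finset.Icc 1 n) a b
        have hd : (0:ℝ) < ((∑ i ∈ Finset.Icc 1 n, a i) * (∑ i ∈ Finset.Icc 1 n, b i)) ^ 2 :=
          pow_pos (mul_pos (hSa n hn) (hSb n hn)) 2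
        rw [hPdef, hQa, hQb]
        simp only [div_pow, div_mul_div_comm, ← mul_pow]
        exact div_le_div_of_nonneg_right hcs hd.le |>.trans_eq rfl
      calc P n ≤ Real.sqrt (P n ^ 2) := by rw [Real.sqrt_sq hPnn]
        _ ≤ Real.sqrt (Qa n * Qb n) := Real.sqrt_le_sqrt hsq
  -- limit of the simplified expression
  have hmain : Tendsto (fun n => (1 - P n) / Real.sqrt ((1 - Qa n) * (1 - Qb n)))
      atTop (nhds 1) := by
    have hnum : Tendsto (fun n => 1 - P n) atTop (nhds 1) := by
      simpa using (tendsto_const_nhds (x := (1:ℝ))).sub hP0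
    have hden : Tendsto (fun n => Real.sqrt ((1 - Qa n) * (1 - Qb n))) atTop (nhds 1) := by
      have h1 : Tendsto (fun n => (1 - Qa n) * (1 - Qb n)) atTop (nhds 1) := by
        have := ((tendsto_const_nhds (x := (1:ℝ))).sub hA).mul
          ((tendsto_const_nhds (x := (1:ℝ))).sub hB)
        simpa using this
      simpa using h1.sqrt
    have := hnum.div hden one_ne_zero
    rw [div_one] at this
    exact this
  refine hmain.congr' ?_
  have hQa1 : ∀ᶠ n in atTop, Qa n < 1 := hA.eventually_lt_const one_pos
  have hQb1 : ∀ᶠ n in atTop, Qb n < 1 := hB.eventually_lt_const one_pos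
  filter_upwards [eventually_ge_atTop 1, hQa1, hQb1] with n hn hqa hqb
  have hSa' := hSa n hn
  have hSb' := hSb n hn
  have hEa : (∑ j ∈ Finset.Icc 1 n, ∑ i ∈ Finset.Ico 1 j, a i * a j)
      = (∑ i ∈ Finset.Icc 1 n, a i) ^ 2 * (1 - Qa n) / 2 := by
    have h := double_sum_eq a n
    have hq : (∑ i ∈ Finset.Icc 1 n, (a i) ^ 2)
        = Qa n * (∑ i ∈ Finset.Icc 1 n, a i) ^ 2 := by
      rw [hQa]; field_simp
    rw [hq] at h; linarith
  have hEb : (∑ j ∈ Finset.Icc 1 n, ∑ i ∈ Finset.Ico 1 j, b i * b j)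
      = (∑ i ∈ Finset.Icc 1 n, b i) ^ 2 * (1 - Qb n) / 2 := by
    have h := double_sum_eq b n
    have hq : (∑ i ∈ Finset.Icc 1 n, (b i) ^ 2)
        = Qb n * (∑ i ∈ Finset.Icc 1 n, b i) ^ 2 := by
      rw [hQb]; field_simp
    rw [hq] at h; linarith
  have hab : (∑ i ∈ Finset.Icc 1 n, a i * b i)
      = P n * ((∑ i ∈ Finset.Icc 1 n, a i) * (∑ i ∈ Finset.Icc 1 n, b i)) := by
    rw [hPdef]; field_simp
  have hsqrt : Real.sqrt ((∑ j ∈ Finset.Icc 1 n, ∑ i ∈ Finset.Ico 1 j, a i * a j) *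
      (∑ j ∈ Finset.Icc 1 n, ∑ i ∈ Finset.Ico 1 j, b i * b j))
      = ((∑ i ∈ Finset.Icc 1 n, a i) * (∑ i ∈ Finset.Icc 1 n, b i) / 2) *
        Real.sqrt ((1 - Qa n) * (1 - Qb n)) := by
    rw [hEa, hEb]
    have heq : (∑ i ∈ Finset.Icc 1 n, a i) ^ 2 * (1 - Qa n) / 2 *
        ((∑ i ∈ Finset.Icc 1 n, b i) ^ 2 * (1 - Qb n) / 2)
        = ((∑ i ∈ Finset.Icc 1 n, a i) * (∑ i ∈ Finset.Icc 1 n, b i) / 2) ^ 2 *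
          ((1 - Qa n) * (1 - Qb n)) := by ring
    rw [heq, Real.sqrt_mul (sq_nonneg _), Real.sqrt_sq
      (by positivity)]
  rw [hsqrt, hab]
  have hSab : (0:ℝ) < (∑ i ∈ Finset.Icc 1 n, a i) * (∑ i ∈ Finset.Icc 1 n, b i) :=
    mul_pos hSa' hSb'
  rw [show (∑ i ∈ Finset.Icc 1 n, a i) * (∑ i ∈ Finset.Icc 1 n, b i)
      - P n * ((∑ i ∈ Finset.Icc 1 n, a i) * (∑ i ∈ Finset.Icc 1 n, b i))
      = ((∑ i ∈ Finset.Icc 1 n, a i) * (∑ i ∈ Finset.Icc 1 n, b i)) * (1 - P n) by ring,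
    show 2 * ((∑ i ∈ Finset.Icc 1 n, a i) * (∑ i ∈ Finset.Icc 1 n, b i) / 2 *
      Real.sqrt ((1 - Qa n) * (1 - Qb n)))
      = ((∑ i ∈ Finset.Icc 1 n, a i) * (∑ i ∈ Finset.Icc 1 n, b i)) *
        Real.sqrt ((1 - Qa n) * (1 - Qb n)) by ring,
    mul_div_mul_left _ _ (ne_of_gt hSab)]
end

section
/- Define κ_m := π^{m/2}/Γ(m/2 + 1) for integers m (possibly negative), where Γ is the Gamma function. Then lim_{n→∞} (2nπ·κ_{n−3})/(κ_{n−2}·(n−1)·√(2πn)) = 1. -/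
open Filter

/-- `κ m = π^{m/2}/Γ(m/2 + 1)`, defined for all integers `m` (possibly negative). -/
noncomputable def kappa (m : ℤ) : ℝ :=
  Real.pi ^ ((m : ℝ) / 2) / Real.Gamma ((m : ℝ) / 2 + 1)

section aux

open Real

lemma gamma_sq_le_aux (x : ℝ) (hx : 0 < x) :
    Real.Gamma (x + 1/2) ^ 2 ≤ Real.Gamma x * Real.Gamma (x + 1) := by
  have h := Real.convexOn_log_Gamma.2 (Set.mem_Ioi.mpr hx)
    (Set.mem_Ioi.mpr (by linarith : (0:ℝ) < x + 1))
    (by norm_num : (0:ℝ) ≤ (1/2 : ℝ)) (by norm_num : (0:ℝ) ≤ (1/2 : ℝ)) (by norm_num)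
  simp only [smul_eq_mul, Function.comp_apply] at h
  have hmid : (1/2 : ℝ) * x + 1/2 * (x + 1) = x + 1/2 := by ring
  rw [hmid] at h
  have hp1 : 0 < Real.Gamma (x + 1/2) := Real.Gamma_pos_of_pos (by linarith)
  have hp2 : 0 < Real.Gamma x := Real.Gamma_pos_of_pos hx
  have hp3 : 0 < Real.Gamma (x + 1) := Real.Gamma_pos_of_pos (by linarith)
  have h2 := Real.exp_le_exp.mpr h
  rw [Real.exp_log hp1, Real.exp_add] at h2
  calc Real.Gamma (x + 1/2) ^ 2
      ≤ (Real.exp (1/2 * Real.log (Real.Gamma x)) *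
          Real.exp (1/2 * Real.log (Real.Gamma (x+1)))) ^ 2 := by
        apply pow_le_pow_left₀ hp1.le h2
    _ = Real.Gamma x * Real.Gamma (x + 1) := by
        rw [mul_pow, ← Real.exp_nat_mul, ← Real.exp_nat_mul]
        push_cast
        rw [show (2:ℝ) * (1/2 * Real.log (Real.Gamma x)) = Real.log (Real.Gamma x) by ring,
            show (2:ℝ) * (1/2 * Real.log (Real.Gamma (x+1))) = Real.log (Real.Gamma (x+1)) by ring,
            Real.exp_log hp2, Real.exp_log hp3]

/-- Upper bound: Γ(x+1/2) ≤ √x · Γ(x). -/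
lemma gamma_ratio_le_aux (x : ℝ) (hx : 0 < x) :
    Real.Gamma (x + 1/2) ≤ Real.sqrt x * Real.Gamma x := by
  have hp1 : 0 < Real.Gamma (x + 1/2) := Real.Gamma_pos_of_pos (by linarith)
  have hp2 : 0 < Real.Gamma x := Real.Gamma_pos_of_pos hx
  have h := gamma_sq_le_aux x hx
  rw [Real.Gamma_add_one hx.ne'] at h
  have hsq : Real.Gamma (x + 1/2) ^ 2 ≤ (Real.sqrt x * Real.Gamma x) ^ 2 := by
    rw [mul_pow, Real.sq_sqrt hx.le]
    nlinarith
  have h3 := Real.sqrt_le_sqrt hsq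
  rwa [Real.sqrt_sq hp1.le, Real.sqrt_sq (by positivity)] at h3

/-- Lower bound: x · Γ(x) ≤ √(x+1/2) · Γ(x+1/2). -/
lemma gamma_ratio_ge_aux (x : ℝ) (hx : 0 < x) :
    x * Real.Gamma x ≤ Real.sqrt (x + 1/2) * Real.Gamma (x + 1/2) := by
  have hx2 : (0:ℝ) < x + 1/2 := by linarith
  have h := gamma_sq_le_aux (x + 1/2) hx2
  rw [show x + 1/2 + 1 = (x + 1/2) + 1 by ring, Real.Gamma_add_one hx2.ne',
      show x + 1/2 + 1/2 = x + 1 by ring, Real.Gamma_add_one hx.ne'] at h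
  have hp1 : 0 < Real.Gamma (x + 1/2) := Real.Gamma_pos_of_pos hx2
  have hsq : (x * Real.Gamma x) ^ 2 ≤ (Real.sqrt (x + 1/2) * Real.Gamma (x + 1/2)) ^ 2 := by
    rw [mul_pow, mul_pow, Real.sq_sqrt hx2.le]
    nlinarith
  have h3 := Real.sqrt_le_sqrt hsq
  rwa [Real.sqrt_sq (by positivity), Real.sqrt_sq (by positivity)] at h3

lemma E_eq_aux (n : ℕ) (hn : 2 ≤ n) :
    (2 * n * Real.pi * kappa ((n : ℤ) - 3)) /
      (kappa ((n : ℤ) - 2) * ((n : ℝ) - 1) * Real.sqrt (2 * Real.pi * n)) =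
    Real.sqrt (2 * n) / ((n : ℝ) - 1) *
      (Real.Gamma ((n : ℝ) / 2) / Real.Gamma (((n : ℝ) - 1) / 2)) := by
  have hm : (2:ℝ) ≤ (n:ℝ) := by exact_mod_cast hn
  unfold kappa
  push_cast
  rw [show ((n:ℝ) - 3) / 2 + 1 = ((n:ℝ) - 1) / 2 by ring,
      show ((n:ℝ) - 2) / 2 + 1 = (n:ℝ) / 2 by ring,
      show ((n:ℝ) - 2) / 2 = ((n:ℝ) - 3) / 2 + 1/2 by ring,
      Real.rpow_add pi_pos, ← Real.sqrt_eq_rpow,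
      show 2 * Real.pi * (n:ℝ) = Real.pi * (2 * n) by ring,
      Real.sqrt_mul pi_pos.le]
  have h2 : Real.sqrt (2*(n:ℝ)) * Real.sqrt (2*(n:ℝ)) = 2*(n:ℝ) :=
    Real.mul_self_sqrt (by positivity)
  have ha : Real.pi ^ (((n:ℝ) - 3) / 2) ≠ 0 := (Real.rpow_pos_of_pos pi_pos _).ne'
  have hb : Real.sqrt Real.pi ≠ 0 := by positivity
  have hc : Real.sqrt (2*(n:ℝ)) ≠ 0 := by positivity
  have hd : Real.Gamma (((n:ℝ) - 1) / 2) ≠ 0 :=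
    (Real.Gamma_pos_of_pos (by linarith)).ne'
  have he : Real.Gamma ((n:ℝ) / 2) ≠ 0 := (Real.Gamma_pos_of_pos (by linarith)).ne'
  have hf : (n:ℝ) - 1 ≠ 0 := by linarith
  field_simp
  ring_nf
  simp only [Real.sq_sqrt pi_pos.le, Real.sq_sqrt (by positivity : (0:ℝ) ≤ (n:ℝ) * 2)]
  ring

lemma E_lower_aux (n : ℕ) (hn : 2 ≤ n) :
    1 ≤ Real.sqrt (2 * n) / ((n : ℝ) - 1) *
      (Real.Gamma ((n : ℝ) / 2) / Real.Gamma (((n : ℝ) - 1) / 2)) := by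
  have hm : (2:ℝ) ≤ (n:ℝ) := by exact_mod_cast hn
  set x : ℝ := ((n:ℝ) - 1) / 2 with hxdef
  have hx : 0 < x := by rw [hxdef]; linarith
  have hx2 : x + 1/2 = (n:ℝ)/2 := by rw [hxdef]; ring
  have hG1 : 0 < Real.Gamma x := Real.Gamma_pos_of_pos hx
  have hG2 : 0 < Real.Gamma ((n:ℝ)/2) := Real.Gamma_pos_of_pos (by linarith)
  have hge := gamma_ratio_ge_aux x hx
  rw [hx2] at hge
  -- hge : x * Γ x ≤ √(n/2) * Γ (n/2)
  have hs : (0:ℝ) < Real.sqrt ((n:ℝ)/2) := Real.sqrt_pos.mpr (by linarith)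
  have hR : x / Real.sqrt ((n:ℝ)/2) ≤ Real.Gamma ((n:ℝ)/2) / Real.Gamma x := by
    rw [div_le_div_iff₀ hs hG1]
    linarith [hge]
  have hkey : Real.sqrt (2 * n) / ((n:ℝ) - 1) * (x / Real.sqrt ((n:ℝ)/2)) = 1 := by
    have h4 : Real.sqrt (2 * (n:ℝ)) = 2 * Real.sqrt ((n:ℝ)/2) := by
      rw [show 2 * (n:ℝ) = 4 * ((n:ℝ)/2) by ring,
          show (4:ℝ) = 2^2 by norm_num, Real.sqrt_mul (by positivity),
          Real.sqrt_sq (by norm_num : (0:ℝ) ≤ 2)]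
    have hf : (0:ℝ) < (n:ℝ) - 1 := by linarith
    rw [h4, hxdef, div_mul_div_comm, div_eq_one_iff_eq (by positivity)]
    ring
  calc (1:ℝ) = Real.sqrt (2 * n) / ((n:ℝ) - 1) * (x / Real.sqrt ((n:ℝ)/2)) := hkey.symm
    _ ≤ Real.sqrt (2 * n) / ((n:ℝ) - 1) *
        (Real.Gamma ((n:ℝ)/2) / Real.Gamma x) := by
        apply mul_le_mul_of_nonneg_left hR
          (div_nonneg (Real.sqrt_nonneg _) (by linarith))

lemma E_upper_aux (n : ℕ) (hn : 2 ≤ n) :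
    Real.sqrt (2 * n) / ((n : ℝ) - 1) *
      (Real.Gamma ((n : ℝ) / 2) / Real.Gamma (((n : ℝ) - 1) / 2))
      ≤ Real.sqrt ((n:ℝ) / ((n:ℝ) - 1)) := by
  have hm : (2:ℝ) ≤ (n:ℝ) := by exact_mod_cast hn
  set x : ℝ := ((n:ℝ) - 1) / 2 with hxdef
  have hx : 0 < x := by rw [hxdef]; linarith
  have hx2 : x + 1/2 = (n:ℝ)/2 := by rw [hxdef]; ring
  have hG1 : 0 < Real.Gamma x := Real.Gamma_pos_of_pos hx
  have hle := gamma_ratio_le_aux x hx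
  rw [hx2] at hle
  -- hle : Γ (n/2) ≤ √x * Γ x
  have hR : Real.Gamma ((n:ℝ)/2) / Real.Gamma x ≤ Real.sqrt x := by
    rw [div_le_iff₀ hG1]; exact hle
  have hmono : Real.sqrt (2 * n) / ((n:ℝ) - 1) *
      (Real.Gamma ((n:ℝ)/2) / Real.Gamma x)
      ≤ Real.sqrt (2 * n) / ((n:ℝ) - 1) * Real.sqrt x :=
    mul_le_mul_of_nonneg_left hR
      (div_nonneg (Real.sqrt_nonneg _) (by linarith))
  refine hmono.trans (le_of_eq ?_)
  have h1 : Real.sqrt (2 * (n:ℝ)) * Real.sqrt x = Real.sqrt ((n:ℝ) * ((n:ℝ) - 1)) := by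
    rw [← Real.sqrt_mul (by positivity), hxdef]
    congr 1
    ring
  have h2 : Real.sqrt ((n:ℝ) * ((n:ℝ) - 1)) / ((n:ℝ) - 1)
      = Real.sqrt ((n:ℝ) / ((n:ℝ) - 1)) := by
    have hf : ((n:ℝ) - 1) ≠ 0 := by linarith
    have hq : (n:ℝ) * ((n:ℝ) - 1) = ((n:ℝ) / ((n:ℝ) - 1)) * ((n:ℝ) - 1)^2 := by
      field_simp
    rw [hq, Real.sqrt_mul (div_nonneg n.cast_nonneg (by linarith)),
        Real.sqrt_sq (by linarith),
        mul_div_assoc, div_self (by linarith : (n:ℝ) - 1 ≠ 0), mul_one]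
  rw [div_mul_eq_mul_div, h1, h2]

end aux

/-- `(2nπ·κ_{n−3})/(κ_{n−2}·(n−1)·√(2πn)) → 1` as `n → ∞`. -/
theorem stmt11 :
    Tendsto (fun n : ℕ =>
        (2 * n * Real.pi * kappa ((n : ℤ) - 3)) /
          (kappa ((n : ℤ) - 2) * ((n : ℝ) - 1) * Real.sqrt (2 * Real.pi * n)))
      atTop (nhds 1) := by
  have hupper : Tendsto (fun n : ℕ => Real.sqrt ((n:ℝ) / ((n:ℝ) - 1))) atTop (nhds 1) := by
    have h0 : Tendsto (fun n : ℕ => (n:ℝ) / ((n:ℝ) - 1)) atTop (nhds 1) := by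
      have h1 : Tendsto (fun n : ℕ => (n:ℝ) - 1) atTop atTop :=
        tendsto_atTop_add_const_right _ (-1) tendsto_natCast_atTop_atTop
      have h2 : Tendsto (fun n : ℕ => ((n:ℝ) - 1)⁻¹) atTop (nhds 0) :=
        h1.inv_tendsto_atTop
      have h3 : Tendsto (fun n : ℕ => 1 + ((n:ℝ) - 1)⁻¹) atTop (nhds 1) := by
        simpa using (tendsto_const_nhds.add h2)
      refine h3.congr' ?_
      filter_upwards [eventually_ge_atTop 2] with n hn
      have hm : (2:ℝ) ≤ (n:ℝ) := by exact_mod_cast hn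
      have hf : (n:ℝ) - 1 ≠ 0 := by linarith
      field_simp
      ring
    have hc : Tendsto Real.sqrt (nhds (1:ℝ)) (nhds 1) := by
      have := Real.continuous_sqrt.tendsto (1:ℝ)
      simpa using this
    exact hc.comp h0
  refine tendsto_of_tendsto_of_tendsto_of_le_of_le' tendsto_const_nhds hupper ?_ ?_
  · filter_upwards [eventually_ge_atTop 2] with n hn
    rw [E_eq_aux n hn]
    exact E_lower_aux n hn
  · filter_upwards [eventually_ge_atTop 2] with n hn
    rw [E_eq_aux n hn]
    exact E_upper_aux n hn
end
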